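/- For an Erdős–Rényi random graph on n vertices with edge probability p, the second matrix moment of the Laplacian satisfies 𝔼[L²] = ((n-2)p² + 2p)(nI - J). -/

import Mathlib

open Matrix MeasureTheory ProbabilityTheory

section Aux

variable {Ω : Type*} [MeasureSpace Ω] [IsProbabilityMeasure (ℙ : Measure Ω)]
  {n : ℕ} {p : ℝ}
  {A : Ω → Matrix (Fin n) (Fin n) ℝ}

lemma aux_int (hmeas : ∀ i j, Measurable fun ω => A ω i j)
    (h01 : ∀ ω i j, A ω i j = 0 ∨ A ω i j = 1) (i j : Fin n) :
    Integrable (fun ω => A ω i j) ℙ := by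
  refine Integrable.mono' (integrable_const 1) (hmeas i j).aestronglyMeasurable
    (ae_of_all _ fun ω => ?_)
  rcases h01 ω i j with h | h <;> simp [h]

lemma aux_int2 (hmeas : ∀ i j, Measurable fun ω => A ω i j)
    (h01 : ∀ ω i j, A ω i j = 0 ∨ A ω i j = 1) (a b c d : Fin n) :
    Integrable (fun ω => A ω a b * A ω c d) ℙ := by
  refine Integrable.mono' (integrable_const 1)
    (((hmeas a b).mul (hmeas c d)).aestronglyMeasurable) (ae_of_all _ fun ω => ?_)
  rcases h01 ω a b with h | h <;> rcases h01 ω c d with h' | h' <;> simp [h, h']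

lemma aux_E (hp : p ∈ Set.Ioo (0 : ℝ) 1)
    (hmeas : ∀ i j, Measurable fun ω => A ω i j)
    (h01 : ∀ ω i j, A ω i j = 0 ∨ A ω i j = 1)
    (hbern : ∀ i j, i ≠ j → (ℙ : Measure Ω) {ω | A ω i j = 1} = ENNReal.ofReal p)
    (i j : Fin n) (hij : i ≠ j) :
    ∫ ω, A ω i j = p := by
  have hs : MeasurableSet {ω | A ω i j = 1} := (hmeas i j) (measurableSet_singleton 1)
  have hrw : (fun ω => A ω i j) =
      fun ω => Set.indicator {ω | A ω i j = 1} (fun _ => (1 : ℝ)) ω := by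
    funext ω
    rcases h01 ω i j with h | h
    · rw [Set.indicator_of_notMem]
      · exact h
      · simp [Set.mem_setOf_eq, h]
    · rw [Set.indicator_of_mem]
      · exact h
      · exact h
  rw [hrw, integral_indicator_const (1 : ℝ) hs, measureReal_def, hbern i j hij, smul_eq_mul, mul_one,
    ENNReal.toReal_ofReal hp.1.le]

lemma aux_sq (h01 : ∀ ω i j, A ω i j = 0 ∨ A ω i j = 1) (ω : Ω) (a b : Fin n) :
    A ω a b * A ω a b = A ω a b := by
  rcases h01 ω a b with h | h <;> simp [h]

lemma aux_Ep (hp : p ∈ Set.Ioo (0 : ℝ) 1)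
    (hmeas : ∀ i j, Measurable fun ω => A ω i j)
    (h01 : ∀ ω i j, A ω i j = 0 ∨ A ω i j = 1)
    (hbern : ∀ i j, i ≠ j → (ℙ : Measure Ω) {ω | A ω i j = 1} = ENNReal.ofReal p)
    (a b : Fin n) (hab : a ≠ b) :
    ∫ ω, A ω a b * A ω a b = p := by
  have : (fun ω => A ω a b * A ω a b) = fun ω => A ω a b :=
    funext fun ω => aux_sq h01 ω a b
  rw [this]; exact aux_E hp hmeas h01 hbern a b hab

lemma aux_core (hp : p ∈ Set.Ioo (0 : ℝ) 1)
    (hmeas : ∀ i j, Measurable fun ω => A ω i j)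
    (h01 : ∀ ω i j, A ω i j = 0 ∨ A ω i j = 1)
    (hbern : ∀ i j, i ≠ j → (ℙ : Measure Ω) {ω | A ω i j = 1} = ENNReal.ofReal p)
    (hindep : iIndepFun
      (fun (e : {e : Fin n × Fin n // e.1 < e.2}) ω => A ω e.1.1 e.1.2) ℙ)
    (a b c d : Fin n) (hab : a < b) (hcd : c < d) (hne : (a, b) ≠ (c, d)) :
    ∫ ω, A ω a b * A ω c d = p * p := by
  have hi : IndepFun (fun ω => A ω a b) (fun ω => A ω c d) ℙ := by
    have := hindep.indepFun (i := ⟨(a, b), hab⟩) (j := ⟨(c, d), hcd⟩)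
      (by simpa [Subtype.ext_iff] using hne)
    exact this
  have := hi.integral_mul_eq_mul_integral (aux_int hmeas h01 a b).aestronglyMeasurable
    (aux_int hmeas h01 c d).aestronglyMeasurable
  rw [aux_E hp hmeas h01 hbern a b hab.ne, aux_E hp hmeas h01 hbern c d hcd.ne] at this
  simpa [Pi.mul_def] using this

lemma aux_pp (hp : p ∈ Set.Ioo (0 : ℝ) 1)
    (hmeas : ∀ i j, Measurable fun ω => A ω i j)
    (hsymm : ∀ ω i j, A ω i j = A ω j i)
    (h01 : ∀ ω i j, A ω i j = 0 ∨ A ω i j = 1)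
    (hbern : ∀ i j, i ≠ j → (ℙ : Measure Ω) {ω | A ω i j = 1} = ENNReal.ofReal p)
    (hindep : iIndepFun
      (fun (e : {e : Fin n × Fin n // e.1 < e.2}) ω => A ω e.1.1 e.1.2) ℙ)
    (a b c d : Fin n) (hab : a ≠ b) (hcd : c ≠ d)
    (h1 : (a, b) ≠ (c, d)) (h2 : (a, b) ≠ (d, c)) :
    ∫ ω, A ω a b * A ω c d = p * p := by
  have key := aux_core (A := A) hp hmeas h01 hbern hindep
  rcases hab.lt_or_gt with hab' | hab' <;> rcases hcd.lt_or_gt with hcd' | hcd'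
  · exact key a b c d hab' hcd' h1
  · have hrw : (fun ω => A ω a b * A ω c d) = fun ω => A ω a b * A ω d c :=
      funext fun ω => by rw [hsymm ω c d]
    rw [hrw]; exact key a b d c hab' hcd' h2
  · have hrw : (fun ω => A ω a b * A ω c d) = fun ω => A ω b a * A ω c d :=
      funext fun ω => by rw [hsymm ω a b]
    rw [hrw]
    refine key b a c d hab' hcd' fun h => h2 ?_
    rw [Prod.ext_iff] at h ⊢; exact ⟨h.2, h.1⟩
  · have hrw : (fun ω => A ω a b * A ω c d) = fun ω => A ω b a * A ω d c :=
      funext fun ω => by rw [hsymm ω a b, hsymm ω c d]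
    rw [hrw]
    refine key b a d c hab' hcd' fun h => h1 ?_
    rw [Prod.ext_iff] at h ⊢; exact ⟨h.2, h.1⟩

lemma sum_pat1 {α : Type*} [Fintype α] [DecidableEq α] (x : α) (u w : ℝ) :
    ∑ l, (if l = x then u else w) = u + ((Fintype.card α : ℝ) - 1) * w := by
  have h1 : ∑ l : α, ((if l = x then u else w) - w) = u - w := by
    rw [← Finset.sum_subset (Finset.subset_univ {x})
      (fun z _ hz => by simp only [Finset.mem_singleton] at hz; simp [hz])]
    simp
  have h2 : ∑ l : α, (if l = x then u else w)
      = ∑ l : α, (((if l = x then u else w) - w) + w) := by simp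
  rw [h2, Finset.sum_add_distrib, h1, Finset.sum_const, Finset.card_univ, nsmul_eq_mul]
  ring

lemma sum_pat2 {α : Type*} [Fintype α] [DecidableEq α] (x y : α) (hxy : x ≠ y) (u v w : ℝ) :
    ∑ l, (if l = x then u else if l = y then v else w)
      = u + v + ((Fintype.card α : ℝ) - 2) * w := by
  have h1 : ∑ l : α, ((if l = x then u else if l = y then v else w) - w)
      = (u - w) + (v - w) := by
    rw [← Finset.sum_subset (Finset.subset_univ {x, y})
      (fun z _ hz => by
        simp only [Finset.mem_insert, Finset.mem_singleton, not_or] at hz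
        simp [hz.1, hz.2]),
      Finset.sum_pair hxy]
    simp [hxy.symm, hxy]
  have h2 : ∑ l : α, (if l = x then u else if l = y then v else w)
      = ∑ l : α, (((if l = x then u else if l = y then v else w) - w) + w) := by simp
  rw [h2, Finset.sum_add_distrib, h1, Finset.sum_const, Finset.card_univ, nsmul_eq_mul]
  ring

end Aux

/-- Second matrix moment of the Erdős–Rényi Laplacian: `𝔼[L²] = ((n-2)p² + 2p)(n I - J)`. -/
theorem stmt3 (n : ℕ) (p : ℝ) (hp : p ∈ Set.Ioo (0 : ℝ) 1)
    {Ω : Type*} [MeasureSpace Ω] [IsProbabilityMeasure (ℙ : Measure Ω)]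
    (A : Ω → Matrix (Fin n) (Fin n) ℝ)
    (hmeas : ∀ i j, Measurable fun ω => A ω i j)
    (hsymm : ∀ ω i j, A ω i j = A ω j i)
    (hdiag : ∀ ω i, A ω i i = 0)
    (h01 : ∀ ω i j, A ω i j = 0 ∨ A ω i j = 1)
    (hbern : ∀ i j, i ≠ j → (ℙ : Measure Ω) {ω | A ω i j = 1} = ENNReal.ofReal p)
    (hindep : iIndepFun
      (fun (e : {e : Fin n × Fin n // e.1 < e.2}) ω => A ω e.1.1 e.1.2) ℙ)
    (L : Ω → Matrix (Fin n) (Fin n) ℝ)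
    (hL : ∀ ω, L ω = Matrix.diagonal (fun i => ∑ j, A ω i j) - A ω) :
    ∀ i j, ∫ ω, (L ω ^ 2) i j =
      ((((n : ℝ) - 2) * p ^ 2 + 2 * p) •
        ((n : ℝ) • (1 : Matrix (Fin n) (Fin n) ℝ) - Matrix.of fun _ _ => (1 : ℝ))
        : Matrix (Fin n) (Fin n) ℝ) i j := by
  intro i j
  have hint2 := aux_int2 (A := A) hmeas h01
  have hEp := aux_Ep (A := A) hp hmeas h01 hbern
  have hpp := aux_pp (A := A) hp hmeas hsymm h01 hbern hindep
  have hcard : (Fintype.card (Fin n) : ℝ) = (n : ℝ) := by simp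
  by_cases hij : i = j
  · subst hij
    -- diagonal case
    have expand : (fun ω => (L ω ^ 2) i i)
        = fun ω => (∑ m, ∑ l, A ω i m * A ω i l) + ∑ k, A ω i k * A ω k i := by
      funext ω
      rw [hL, sq, Matrix.mul_apply]
      have step : ∀ k, ((Matrix.diagonal (fun i => ∑ j, A ω i j) - A ω) i k) *
          ((Matrix.diagonal (fun i => ∑ j, A ω i j) - A ω) k i)
          = (if k = i then (∑ m, A ω i m) * (∑ m, A ω i m) else 0)
            + A ω i k * A ω k i := by
        intro k
        by_cases hk : k = i
        · rw [hk]; simp [Matrix.diagonal_apply, hdiag]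
        · simp [Matrix.diagonal_apply, hk, Ne.symm hk]
      rw [Finset.sum_congr rfl (fun k _ => step k), Finset.sum_add_distrib,
        Finset.sum_ite_eq' Finset.univ i (fun _ => (∑ m, A ω i m) * (∑ m, A ω i m))]
      simp [Finset.sum_mul_sum]
    have tv1 : ∀ m l, ∫ ω, A ω i m * A ω i l
        = if m = i then 0 else if l = i then 0 else if l = m then p else p * p := by
      intro m l
      by_cases hm : m = i
      · rw [if_pos hm, hm, show (fun ω => A ω i i * A ω i l) = fun _ => (0 : ℝ) from
          funext fun ω => by rw [hdiag, zero_mul], integral_zero]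
      · rw [if_neg hm]
        by_cases hl : l = i
        · rw [if_pos hl, hl, show (fun ω => A ω i m * A ω i i) = fun _ => (0 : ℝ) from
            funext fun ω => by rw [hdiag, mul_zero], integral_zero]
        · rw [if_neg hl]
          by_cases hlm : l = m
          · rw [if_pos hlm, hlm]; exact hEp i m (Ne.symm hm)
          · rw [if_neg hlm]
            exact hpp i m i l (Ne.symm hm) (Ne.symm hl)
              (fun h => hlm (congrArg Prod.snd h).symm)
              (fun h => hl (congrArg Prod.fst h).symm)
    have inner1 : ∀ m, ∑ l, ∫ ω, A ω i m * A ω i l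
        = if m = i then 0 else (0 + p + ((n : ℝ) - 2) * (p * p)) := by
      intro m
      by_cases hm : m = i
      · rw [if_pos hm, Finset.sum_congr rfl (fun l _ => tv1 m l)]
        simp [hm]
      · rw [if_neg hm,
          Finset.sum_congr rfl (fun l _ => by rw [tv1 m l, if_neg hm]),
          sum_pat2 i m (Ne.symm hm) 0 p (p * p), hcard]
    have D1 : ∫ ω, ∑ m, ∑ l, A ω i m * A ω i l
        = 0 + ((n : ℝ) - 1) * (0 + p + ((n : ℝ) - 2) * (p * p)) := by
      calc ∫ ω, ∑ m, ∑ l, A ω i m * A ω i l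
          = ∑ m, ∫ ω, ∑ l, A ω i m * A ω i l := integral_finset_sum _ (fun m _ =>
            integrable_finset_sum _ (fun l _ => hint2 i m i l))
        _ = ∑ m, (if m = i then 0 else (0 + p + ((n : ℝ) - 2) * (p * p))) :=
            Finset.sum_congr rfl fun m _ => by
              rw [show (∫ ω, ∑ l, A ω i m * A ω i l) = ∑ l, ∫ ω, A ω i m * A ω i l from
                integral_finset_sum _ (fun l _ => hint2 i m i l)]
              exact inner1 m
        _ = _ := by rw [sum_pat1 i 0 (0 + p + ((n : ℝ) - 2) * (p * p)), hcard]
    have tv2 : ∀ k, ∫ ω, A ω i k * A ω k i = if k = i then 0 else p := by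
      intro k
      by_cases hk : k = i
      · rw [if_pos hk, hk, show (fun ω => A ω i i * A ω i i) = fun _ => (0 : ℝ) from
          funext fun ω => by rw [hdiag, zero_mul], integral_zero]
      · rw [if_neg hk, show (fun ω => A ω i k * A ω k i) = fun ω => A ω i k * A ω i k from
          funext fun ω => by rw [hsymm ω k i]]
        exact hEp i k (Ne.symm hk)
    have D2 : ∫ ω, ∑ k, A ω i k * A ω k i = 0 + ((n : ℝ) - 1) * p := by
      calc ∫ ω, ∑ k, A ω i k * A ω k i
          = ∑ k, ∫ ω, A ω i k * A ω k i := integral_finset_sum _ (fun k _ => hint2 i k k i)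
        _ = ∑ k, (if k = i then 0 else p) := Finset.sum_congr rfl fun k _ => tv2 k
        _ = _ := by rw [sum_pat1 i 0 p, hcard]
    have D0 : ∫ ω, (∑ m, ∑ l, A ω i m * A ω i l) + ∑ k, A ω i k * A ω k i
        = (0 + ((n : ℝ) - 1) * (0 + p + ((n : ℝ) - 2) * (p * p)))
          + (0 + ((n : ℝ) - 1) * p) := by
      calc ∫ ω, (∑ m, ∑ l, A ω i m * A ω i l) + ∑ k, A ω i k * A ω k i
          = (∫ ω, ∑ m, ∑ l, A ω i m * A ω i l) + ∫ ω, ∑ k, A ω i k * A ω k i :=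
            integral_add
              (integrable_finset_sum _ (fun m _ =>
                integrable_finset_sum _ (fun l _ => hint2 i m i l)))
              (integrable_finset_sum _ (fun k _ => hint2 i k k i))
        _ = _ := by rw [D1, D2]
    rw [expand, D0]
    simp only [Matrix.smul_apply, Matrix.sub_apply, Matrix.one_apply_eq, Matrix.of_apply,
      smul_eq_mul]
    ring
  · -- off-diagonal case
    have expand : (fun ω => (L ω ^ 2) i j)
        = fun ω => -(∑ m, A ω i m * A ω i j) + -(∑ m, A ω i j * A ω j m)
          + ∑ k, A ω i k * A ω k j := by
      funext ω
      rw [hL, sq, Matrix.mul_apply]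
      have step : ∀ k, ((Matrix.diagonal (fun i => ∑ j, A ω i j) - A ω) i k) *
          ((Matrix.diagonal (fun i => ∑ j, A ω i j) - A ω) k j)
          = ((if k = i then -((∑ m, A ω i m) * A ω i j) else 0)
            + (if k = j then -(A ω i j * (∑ m, A ω j m)) else 0))
            + A ω i k * A ω k j := by
        intro k
        by_cases hk : k = i
        · rw [hk]
          simp [Matrix.diagonal_apply, hdiag, hij, Ne.symm hij]
        · by_cases hk' : k = j
          · rw [hk']
            simp [Matrix.diagonal_apply, hdiag, hij, Ne.symm hij]
          · simp only [Matrix.diagonal_apply, Matrix.sub_apply, if_neg hk, if_neg hk',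
              if_neg (fun h => hk (Eq.symm h))]
            ring
      rw [Finset.sum_congr rfl (fun k _ => step k), Finset.sum_add_distrib,
        Finset.sum_add_distrib,
        Finset.sum_ite_eq' Finset.univ i (fun _ => -((∑ m, A ω i m) * A ω i j)),
        Finset.sum_ite_eq' Finset.univ j (fun _ => -(A ω i j * (∑ m, A ω j m)))]
      simp [Finset.sum_mul, Finset.mul_sum]
    have tv1 : ∀ m, ∫ ω, A ω i m * A ω i j
        = if m = i then 0 else if m = j then p else p * p := by
      intro m
      by_cases hm : m = i
      · rw [if_pos hm, hm, show (fun ω => A ω i i * A ω i j) = fun _ => (0 : ℝ) from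
          funext fun ω => by rw [hdiag, zero_mul], integral_zero]
      · rw [if_neg hm]
        by_cases hm' : m = j
        · rw [if_pos hm', hm']; exact hEp i j hij
        · rw [if_neg hm']
          exact hpp i m i j (Ne.symm hm) hij
            (fun h => hm' (congrArg Prod.snd h))
            (fun h => hij (congrArg Prod.fst h))
    have tv2 : ∀ m, ∫ ω, A ω i j * A ω j m
        = if m = j then 0 else if m = i then p else p * p := by
      intro m
      by_cases hm : m = j
      · rw [if_pos hm, hm, show (fun ω => A ω i j * A ω j j) = fun _ => (0 : ℝ) from
          funext fun ω => by rw [hdiag, mul_zero], integral_zero]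
      · rw [if_neg hm]
        by_cases hm' : m = i
        · rw [if_pos hm', hm', show (fun ω => A ω i j * A ω j i) =
            fun ω => A ω i j * A ω i j from funext fun ω => by rw [hsymm ω j i]]
          exact hEp i j hij
        · rw [if_neg hm']
          exact hpp i j j m hij (Ne.symm hm)
            (fun h => hij (congrArg Prod.fst h))
            (fun h => hm' (congrArg Prod.fst h).symm)
    have tv3 : ∀ k, ∫ ω, A ω i k * A ω k j
        = if k = i then 0 else if k = j then 0 else p * p := by
      intro k
      by_cases hk : k = i
      · rw [if_pos hk, hk, show (fun ω => A ω i i * A ω i j) = fun _ => (0 : ℝ) from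
          funext fun ω => by rw [hdiag, zero_mul], integral_zero]
      · rw [if_neg hk]
        by_cases hk' : k = j
        · rw [if_pos hk', hk', show (fun ω => A ω i j * A ω j j) = fun _ => (0 : ℝ) from
            funext fun ω => by rw [hdiag, mul_zero], integral_zero]
        · rw [if_neg hk']
          exact hpp i k k j (Ne.symm hk) hk'
            (fun h => hk' (congrArg Prod.snd h))
            (fun h => hij (congrArg Prod.fst h))
    have S1 : ∫ ω, ∑ m, A ω i m * A ω i j = 0 + p + ((n : ℝ) - 2) * (p * p) := by
      calc ∫ ω, ∑ m, A ω i m * A ω i j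
          = ∑ m, ∫ ω, A ω i m * A ω i j := integral_finset_sum _ (fun m _ => hint2 i m i j)
        _ = ∑ m, (if m = i then 0 else if m = j then p else p * p) :=
            Finset.sum_congr rfl fun m _ => tv1 m
        _ = _ := by rw [sum_pat2 i j hij 0 p (p * p), hcard]
    have S2 : ∫ ω, ∑ m, A ω i j * A ω j m = 0 + p + ((n : ℝ) - 2) * (p * p) := by
      calc ∫ ω, ∑ m, A ω i j * A ω j m
          = ∑ m, ∫ ω, A ω i j * A ω j m := integral_finset_sum _ (fun m _ => hint2 i j j m)
        _ = ∑ m, (if m = j then 0 else if m = i then p else p * p) :=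
            Finset.sum_congr rfl fun m _ => tv2 m
        _ = _ := by rw [sum_pat2 j i (Ne.symm hij) 0 p (p * p), hcard]
    have S3 : ∫ ω, ∑ k, A ω i k * A ω k j = 0 + 0 + ((n : ℝ) - 2) * (p * p) := by
      calc ∫ ω, ∑ k, A ω i k * A ω k j
          = ∑ k, ∫ ω, A ω i k * A ω k j := integral_finset_sum _ (fun k _ => hint2 i k k j)
        _ = ∑ k, (if k = i then 0 else if k = j then 0 else p * p) :=
            Finset.sum_congr rfl fun k _ => tv3 k
        _ = _ := by rw [sum_pat2 i j hij 0 0 (p * p), hcard]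
    have hI1 : Integrable (fun ω => ∑ m, A ω i m * A ω i j) ℙ :=
      integrable_finset_sum _ (fun m _ => hint2 i m i j)
    have hI2 : Integrable (fun ω => ∑ m, A ω i j * A ω j m) ℙ :=
      integrable_finset_sum _ (fun m _ => hint2 i j j m)
    have hI3 : Integrable (fun ω => ∑ k, A ω i k * A ω k j) ℙ :=
      integrable_finset_sum _ (fun k _ => hint2 i k k j)
    have D0 : ∫ ω, -(∑ m, A ω i m * A ω i j) + -(∑ m, A ω i j * A ω j m)
          + ∑ k, A ω i k * A ω k j
        = -(0 + p + ((n : ℝ) - 2) * (p * p)) + -(0 + p + ((n : ℝ) - 2) * (p * p))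
          + (0 + 0 + ((n : ℝ) - 2) * (p * p)) := by
      calc ∫ ω, -(∑ m, A ω i m * A ω i j) + -(∑ m, A ω i j * A ω j m)
            + ∑ k, A ω i k * A ω k j
          = (∫ ω, -(∑ m, A ω i m * A ω i j) + -(∑ m, A ω i j * A ω j m))
            + ∫ ω, ∑ k, A ω i k * A ω k j := integral_add (hI1.neg.add hI2.neg) hI3
        _ = ((∫ ω, -(∑ m, A ω i m * A ω i j)) + ∫ ω, -(∑ m, A ω i j * A ω j m))
            + ∫ ω, ∑ k, A ω i k * A ω k j :=
            congrArg (· + ∫ ω, ∑ k, A ω i k * A ω k j) (integral_add hI1.neg hI2.neg)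
        _ = _ := by rw [integral_neg, integral_neg, S1, S2, S3]
    rw [expand, D0]
    simp only [Matrix.smul_apply, Matrix.sub_apply, Matrix.one_apply_ne hij, Matrix.of_apply,
      smul_eq_mul]
    ring
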